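/- arXiv:1708.02063 — 5 statements merged into one kernel-verified Lean document; each statement's English description precedes it below -/
import Mathlib

section
/- Let ≺ be a strict partial order on the set of genotypes {0,1}^n (n ≥ 1). Then every fitness landscape w : {0,1}^n → ℝ that strictly respects ≺ has positive n-way epistasis (i.e., Σ_{g even} w(g) − Σ_{g odd} w(g) > 0) if and only if there exists a bijection π from the set of odd genotypes to the set of even genotypes such that o ≺ π(o) for every odd genotype o. -/
/-- Genotypes of an `n`-locus biallelic system. -/
abbrev Genotype (n : ℕ) := Fin n → Bool

/-- The number of coordinates of a genotype equal to 1 (true). -/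
def dOnes {n : ℕ} (g : Genotype n) : ℕ :=
  (Finset.univ.filter (fun i => g i = true)).card

/-- The total `n`-way epistasis of a fitness landscape:
sum of fitnesses over even genotypes minus sum over odd genotypes. -/
noncomputable def epi (n : ℕ) (w : Genotype n → ℝ) : ℝ :=
  ∑ g ∈ Finset.univ.filter (fun g : Genotype n => Even (dOnes g)), w g -
    ∑ g ∈ Finset.univ.filter (fun g : Genotype n => Odd (dOnes g)), w g

lemma dOnes_flip_odd_iff {n : ℕ} (g : Genotype n) (i0 : Fin n) :
    Odd (dOnes (Function.update g i0 (!g i0))) ↔ Even (dOnes g) := by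
  classical
  unfold dOnes
  by_cases h : g i0 = true
  · have hset : Finset.univ.filter (fun i => Function.update g i0 (!g i0) i = true)
        = (Finset.univ.filter (fun i => g i = true)).erase i0 := by
      ext i
      by_cases hi : i = i0 <;> simp [Function.update_apply, hi, h]
    have hmem : i0 ∈ Finset.univ.filter (fun i => g i = true) := by simp [h]
    rw [hset, Finset.card_erase_of_mem hmem]
    have hpos : 0 < (Finset.univ.filter (fun i => g i = true)).card :=
      Finset.card_pos.mpr ⟨i0, hmem⟩
    obtain ⟨m, hm⟩ : ∃ m, (Finset.univ.filter (fun i => g i = true)).card = m + 1 :=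
      ⟨_, (Nat.succ_pred_eq_of_pos hpos).symm⟩
    rw [hm, Nat.add_sub_cancel, Nat.even_add_one, ← Nat.not_even_iff_odd]
  · have hset : Finset.univ.filter (fun i => Function.update g i0 (!g i0) i = true)
        = insert i0 (Finset.univ.filter (fun i => g i = true)) := by
      ext i
      by_cases hi : i = i0 <;> simp [Function.update_apply, hi, h]
    have hmem : i0 ∉ Finset.univ.filter (fun i => g i = true) := by simp [h]
    rw [hset, Finset.card_insert_of_notMem hmem, Nat.odd_add_one, ← Nat.not_odd_iff_even]

lemma dOnes_flip_even_iff {n : ℕ} (g : Genotype n) (i0 : Fin n) :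
    Even (dOnes (Function.update g i0 (!g i0))) ↔ Odd (dOnes g) := by
  rw [← Nat.not_odd_iff_even, dOnes_flip_odd_iff, Nat.not_even_iff_odd]

lemma flip_flip_update {n : ℕ} (g : Genotype n) (i0 : Fin n) :
    Function.update (Function.update g i0 (!g i0)) i0
      (!(Function.update g i0 (!g i0)) i0) = g := by
  simp [Function.update_idem]

/-- Flipping coordinate `i0` gives a bijection between odd and even genotypes. -/
def flipEquiv (n : ℕ) (i0 : Fin n) :
    {g : Genotype n // Odd (dOnes g)} ≃ {g : Genotype n // Even (dOnes g)} where
  toFun o := ⟨Function.update o.val i0 (!o.val i0), (dOnes_flip_even_iff o.val i0).mpr o.2⟩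
  invFun e := ⟨Function.update e.val i0 (!e.val i0), (dOnes_flip_odd_iff e.val i0).mpr e.2⟩
  left_inv o := Subtype.ext (flip_flip_update o.val i0)
  right_inv e := Subtype.ext (flip_flip_update e.val i0)

theorem partial_order_implies_epistasis_iff_matching
    (n : ℕ) (hn : 1 ≤ n)
    (prec : Genotype n → Genotype n → Prop)
    (hpo : IsStrictOrder (Genotype n) prec) :
    (∀ w : Genotype n → ℝ, (∀ g h, prec g h → w g < w h) → 0 < epi n w) ↔
      (∃ π : {g : Genotype n // Odd (dOnes g)} ≃ {g : Genotype n // Even (dOnes g)},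
        ∀ o, prec o.val (π o).val) := by
  classical
  set i0 : Fin n := ⟨0, hn⟩ with hi0
  have htrans : ∀ a b c, prec a b → prec b c → prec a c := fun a b c => hpo.toIsTrans.trans a b c
  have hirr : ∀ a, ¬ prec a a := fun a => irrefl_of prec a
  -- a nonempty odd genotype
  have hodd_ne : Nonempty {g : Genotype n // Odd (dOnes g)} := by
    refine ⟨⟨fun i => decide (i = i0), ?_⟩⟩
    have : (Finset.univ.filter (fun i => (decide (i = i0)) = true)) = {i0} := by
      ext i; simp
    unfold dOnes
    rw [this]
    simp
  constructor
  · -- forward direction: positivity for all w implies a matching exists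
    intro H
    set α := {g : Genotype n // Odd (dOnes g)}
    set β := {g : Genotype n // Even (dOnes g)}
    let t : α → Finset β := fun o => Finset.univ.filter (fun e => prec o.val e.val)
    have hall : ∀ S : Finset α, S.card ≤ (S.biUnion t).card := by
      by_contra hS
      push_neg at hS
      obtain ⟨S, hS⟩ := hS
      -- the "bad" up-closed set
      let T : Finset (Genotype n) :=
        Finset.univ.filter (fun h => (∃ o ∈ S, o.val = h) ∨ ∃ o ∈ S, prec o.val h)
      -- the base landscape: rank function
      let w0 : Genotype n → ℝ := fun g => ((Finset.univ.filter (fun x => prec x g)).card : ℝ)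
      have hw0 : ∀ g h, prec g h → w0 g < w0 h := by
        intro g h hgh
        have hsub : Finset.univ.filter (fun x => prec x g)
            ⊂ Finset.univ.filter (fun x => prec x h) := by
          rw [Finset.ssubset_iff_of_subset]
          · exact ⟨g, by simp [hgh], by simp [hirr g]⟩
          · intro x hx
            simp only [Finset.mem_filter, Finset.mem_univ, true_and] at hx ⊢
            exact htrans _ _ _ hx hgh
        simp only [w0]
        exact_mod_cast Finset.card_lt_card hsub
      set c : ℝ := max (epi n w0) 1 with hc
      have hc1 : (1 : ℝ) ≤ c := le_max_right _ _
      have hc0 : (0 : ℝ) < c := lt_of_lt_of_le one_pos hc1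
      have hcE : epi n w0 ≤ c := le_max_left _ _
      set w : Genotype n → ℝ := fun g => w0 g + (if g ∈ T then c else 0) with hwdef
      have hTup : ∀ g h, g ∈ T → prec g h → h ∈ T := by
        intro g h hg hgh
        simp only [T, Finset.mem_filter, Finset.mem_univ, true_and] at hg ⊢
        rcases hg with ⟨o, hoS, rfl⟩ | ⟨o, hoS, ho⟩
        · exact Or.inr ⟨o, hoS, hgh⟩
        · exact Or.inr ⟨o, hoS, htrans _ _ _ ho hgh⟩
      have hw : ∀ g h, prec g h → w g < w h := by
        intro g h hgh
        have h1 := hw0 g h hgh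
        have h2 : (if g ∈ T then c else 0) ≤ (if h ∈ T then c else 0) := by
          by_cases hg : g ∈ T
          · simp [hg, hTup g h hg hgh]
          · simp only [hg, if_false]
            split <;> [exact hc0.le; exact le_refl 0]
        exact add_lt_add_of_lt_of_le h1 h2
      have hpos := H w hw
      -- cardinality bookkeeping
      set A := ((Finset.univ.filter (fun g : Genotype n => Even (dOnes g))).filter
        (fun g => g ∈ T)).card with hA
      set B := ((Finset.univ.filter (fun g : Genotype n => Odd (dOnes g))).filter
        (fun g => g ∈ T)).card with hB
      have hSB : S.card ≤ B := by
        rw [hB, ← Finset.card_image_of_injective S Subtype.val_injective]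
        apply Finset.card_le_card
        intro x hx
        simp only [Finset.mem_image] at hx
        obtain ⟨o, hoS, rfl⟩ := hx
        simp only [Finset.mem_filter, Finset.mem_univ, true_and, T]
        exact ⟨o.2, Or.inl ⟨o, hoS, rfl⟩⟩
      have hAB : A ≤ (S.biUnion t).card := by
        rw [hA, ← Finset.card_image_of_injective (S.biUnion t) Subtype.val_injective]
        apply Finset.card_le_card
        intro x hx
        simp only [Finset.mem_filter, Finset.mem_univ, true_and] at hx
        obtain ⟨hxE, hxT⟩ := hx
        simp only [T, Finset.mem_filter, Finset.mem_univ, true_and] at hxT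
        rcases hxT with ⟨o, hoS, rfl⟩ | ⟨o, hoS, ho⟩
        · exact absurd hxE (Nat.not_even_iff_odd.mpr o.2)
        · simp only [Finset.mem_image]
          refine ⟨⟨x, hxE⟩, ?_, rfl⟩
          simp only [Finset.mem_biUnion]
          exact ⟨o, hoS, by simp [t, ho]⟩
      have hABlt : A + 1 ≤ B := by omega
      -- computing the epistasis of w
      have hsum : ∀ s : Finset (Genotype n),
          ∑ g ∈ s, w g = (∑ g ∈ s, w0 g) + (s.filter (fun g => g ∈ T)).card * c := by
        intro s
        rw [hwdef]
        rw [Finset.sum_add_distrib]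
        congr 1
        rw [← Finset.sum_filter, Finset.sum_const, nsmul_eq_mul]
      have hepi : epi n w = epi n w0 + (A : ℝ) * c - (B : ℝ) * c := by
        unfold epi
        rw [hsum, hsum]
        rw [hA, hB]
        ring
      have hmul : ((A : ℝ) + 1) * c ≤ (B : ℝ) * c := by
        apply mul_le_mul_of_nonneg_right _ hc0.le
        exact_mod_cast hABlt
      have : epi n w ≤ 0 := by
        rw [hepi]
        nlinarith
      linarith
    obtain ⟨f, hfinj, hft⟩ := (Finset.all_card_le_biUnion_card_iff_exists_injective t).mp hall
    have hcard : Fintype.card α = Fintype.card β := Fintype.card_congr (flipEquiv n i0)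
    have hbij : Function.Bijective f :=
      (Fintype.bijective_iff_injective_and_card f).mpr ⟨hfinj, hcard⟩
    refine ⟨Equiv.ofBijective f hbij, ?_⟩
    intro o
    have := hft o
    simpa [t] using this
  · -- backward direction
    rintro ⟨π, hπ⟩ w hw
    have h1 : ∑ g ∈ Finset.univ.filter (fun g : Genotype n => Even (dOnes g)), w g
        = ∑ e : {g : Genotype n // Even (dOnes g)}, w e.val := by
      exact Finset.sum_subtype _ (fun x => by simp) (fun g => w g)
    have h2 : ∑ g ∈ Finset.univ.filter (fun g : Genotype n => Odd (dOnes g)), w g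
        = ∑ o : {g : Genotype n // Odd (dOnes g)}, w o.val := by
      exact Finset.sum_subtype _ (fun x => by simp) (fun g => w g)
    have h3 : ∑ e : {g : Genotype n // Even (dOnes g)}, w e.val
        = ∑ o : {g : Genotype n // Odd (dOnes g)}, w (π o).val :=
      (Equiv.sum_comp π (fun e => w e.val)).symm
    have : epi n w = ∑ o : {g : Genotype n // Odd (dOnes g)}, (w (π o).val - w o.val) := by
      unfold epi
      rw [h1, h2, h3, Finset.sum_sub_distrib]
    rw [this]
    apply Finset.sum_pos
    · intro o _
      have := hw o.val (π o).val (hπ o)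
      linarith
    · exact Finset.univ_nonempty
end

section
/- Let ≺ be a strict partial order on the genotypes {0,1}^n (n ≥ 1). Suppose there is a set S of odd genotypes such that the set N(S) = {e even : ∃ o ∈ S, o ≺ e} satisfies |N(S)| < |S|. Then for every real number M there exists a fitness landscape w : {0,1}^n → ℝ strictly respecting ≺ with Σ_{g even} w(g) − Σ_{g odd} w(g) < −M; in particular ≺ does not imply positive n-way epistasis. -/
theorem hall_violation_gives_negative_epistasis
    (n : ℕ) (hn : 1 ≤ n)
    (prec : Genotype n → Genotype n → Prop)
    (hpo : IsStrictOrder (Genotype n) prec)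
    (S : Set (Genotype n)) (hS : ∀ o ∈ S, Odd (dOnes o))
    (hN : {e : Genotype n | Even (dOnes e) ∧ ∃ o ∈ S, prec o e}.ncard < S.ncard) :
    (∀ M : ℝ, ∃ w : Genotype n → ℝ,
        (∀ g h, prec g h → w g < w h) ∧ epi n w < -M) ∧
      ¬ (∀ w : Genotype n → ℝ, (∀ g h, prec g h → w g < w h) → 0 < epi n w) := by
  classical
  have htrans : ∀ a b c, prec a b → prec b c → prec a c := fun a b c =>
    hpo.toIsTrans.trans a b c
  have hirrefl : ∀ a, ¬ prec a a := fun a => hpo.toIrrefl.irrefl a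
  -- base landscape
  set w0 : Genotype n → ℝ := fun g => ((Finset.univ.filter (fun x => prec x g)).card : ℝ)
    with hw0def
  have hw0 : ∀ g h, prec g h → w0 g < w0 h := by
    intro g h hgh
    have hss : (Finset.univ.filter (fun x => prec x g)) ⊂
        (Finset.univ.filter (fun x => prec x h)) := by
      constructor
      · intro x hx
        simp only [Finset.mem_filter, Finset.mem_univ, true_and] at hx ⊢
        exact htrans x g h hx hgh
      · intro hsub
        have hg : g ∈ Finset.univ.filter (fun x => prec x h) :=
          Finset.mem_filter.mpr ⟨Finset.mem_univ g, hgh⟩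
        have := hsub hg
        simp only [Finset.mem_filter, Finset.mem_univ, true_and] at this
        exact hirrefl g this
    simp only [hw0def]
    exact_mod_cast Finset.card_lt_card hss
  -- upper set generated by S
  set Ufin : Finset (Genotype n) :=
    Finset.univ.filter (fun g => g ∈ S ∨ ∃ o ∈ S, prec o g) with hUdef
  have hUup : ∀ g h, prec g h → g ∈ Ufin → h ∈ Ufin := by
    intro g h hgh hg
    simp only [hUdef, Finset.mem_filter, Finset.mem_univ, true_and] at hg ⊢
    rcases hg with hg | ⟨o, ho, hog⟩
    · exact Or.inr ⟨g, hg, hgh⟩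
    · exact Or.inr ⟨o, ho, htrans o g h hog hgh⟩
  set evenF : Finset (Genotype n) :=
    Finset.univ.filter (fun g : Genotype n => Even (dOnes g)) with hEdef
  set oddF : Finset (Genotype n) :=
    Finset.univ.filter (fun g : Genotype n => Odd (dOnes g)) with hOdef
  set a : ℕ := (evenF.filter (fun g => g ∈ Ufin)).card with hadef
  set b : ℕ := (oddF.filter (fun g => g ∈ Ufin)).card with hbdef
  -- a = ncard of N(S)
  have hSfin : S.Finite := Set.toFinite S
  have ha : a = {e : Genotype n | Even (dOnes e) ∧ ∃ o ∈ S, prec o e}.ncard := by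
    have hfe : evenF.filter (fun g => g ∈ Ufin) =
        {e : Genotype n | Even (dOnes e) ∧ ∃ o ∈ S, prec o e}.toFinset := by
      ext g
      simp only [hEdef, hUdef, Finset.mem_filter, Finset.mem_univ, true_and,
        Set.mem_toFinset, Set.mem_setOf_eq]
      constructor
      · rintro ⟨hev, hg | ⟨o, ho, hog⟩⟩
        · exact absurd hev (Nat.not_even_iff_odd.mpr (hS g hg))
        · exact ⟨hev, o, ho, hog⟩
      · rintro ⟨hev, o, ho, hog⟩
        exact ⟨hev, Or.inr ⟨o, ho, hog⟩⟩
    rw [hadef, hfe, Set.ncard_eq_toFinset_card']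
  have hb : S.ncard ≤ b := by
    rw [Set.ncard_eq_toFinset_card']
    apply Finset.card_le_card
    intro g hg
    simp only [Set.mem_toFinset] at hg
    simp only [hbdef, hOdef, hUdef, Finset.mem_filter, Finset.mem_univ, true_and]
    exact ⟨hS g hg, Or.inl hg⟩
  have hab : a < b := lt_of_lt_of_le (ha ▸ hN) hb
  -- main construction
  have main : ∀ M : ℝ, ∃ w : Genotype n → ℝ,
      (∀ g h, prec g h → w g < w h) ∧ epi n w < -M := by
    intro M
    set t : ℝ := |epi n w0| + |M| + 1 with htdef
    have ht : 0 < t := by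
      have h1 := abs_nonneg (epi n w0)
      have h2 := abs_nonneg M
      linarith
    refine ⟨fun g => w0 g + t * (if g ∈ Ufin then (1:ℝ) else 0), ?_, ?_⟩
    · intro g h hgh
      have h1 := hw0 g h hgh
      by_cases hg : g ∈ Ufin
      · have hh := hUup g h hgh hg
        simp only [hg, hh, if_pos]
        linarith
      · by_cases hh : h ∈ Ufin
        · simp only [hg, hh, if_neg, if_pos, not_false_iff]
          nlinarith
        · simp only [hg, hh, if_neg, not_false_iff]
          linarith
    · have hsum : ∀ F : Finset (Genotype n),
          ∑ g ∈ F, (w0 g + t * (if g ∈ Ufin then (1:ℝ) else 0)) =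
          (∑ g ∈ F, w0 g) + t * (F.filter (fun g => g ∈ Ufin)).card := by
        intro F
        rw [Finset.sum_add_distrib, ← Finset.mul_sum]
        congr 1
        rw [Finset.sum_boole]
      have hepi : epi n (fun g => w0 g + t * (if g ∈ Ufin then (1:ℝ) else 0)) =
          epi n w0 + t * ((a : ℝ) - (b : ℝ)) := by
        simp only [epi, ← hEdef, ← hOdef, hsum, ← hadef, ← hbdef]
        ring
      rw [hepi]
      have hab' : (a : ℝ) - (b : ℝ) ≤ -1 := by
        have : (a : ℝ) + 1 ≤ (b : ℝ) := by exact_mod_cast hab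
        linarith
      have h2 : t * ((a : ℝ) - (b : ℝ)) ≤ -t := by nlinarith
      have h3 : epi n w0 ≤ |epi n w0| := le_abs_self _
      have h4 : M ≤ |M| := le_abs_self M
      linarith
  refine ⟨main, ?_⟩
  intro hpos
  obtain ⟨w, hw, he⟩ := main 0
  have := hpos w hw
  linarith
end

section
/- For every n ≥ 3 there exists a fitness landscape w : {0,1}^n → ℝ such that (i) every conditional 3-way epistasis coefficient of w vanishes (w has only pairwise interactions), and (ii) the set of peaks of w is exactly the set of genotypes with exactly ⌊n/2⌋ coordinates equal to 1. Consequently, the maximal number of peaks among landscapes with no higher order epistasis is at least (n choose ⌊n/2⌋). -/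
/-- A peak of a fitness landscape: a genotype of strictly higher fitness than
all of its mutational neighbors (genotypes at Hamming distance 1). -/
def isPeak {n : ℕ} (w : Genotype n → ℝ) (g : Genotype n) : Prop :=
  ∀ h : Genotype n, hammingDist g h = 1 → w h < w g

/-- The conditional 3-way epistasis coefficient of `w` for the three loci
`i`, `j`, `k`, with the remaining loci fixed according to `c`. -/
def cond3 {n : ℕ} (w : Genotype n → ℝ) (i j k : Fin n) (c : Genotype n) : ℝ :=
  ∑ x : Bool × Bool × Bool,
    (-1 : ℝ) ^ (((if x.1 then 1 else 0) + (if x.2.1 then 1 else 0) +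
        (if x.2.2 then 1 else 0) : ℕ)) *
      w (fun l => if l = i then x.1 else if l = j then x.2.1
          else if l = k then x.2.2 else c l)

noncomputable def W (n : ℕ) (g : Genotype n) : ℝ :=
  -(((dOnes g : ℝ)) - ((n / 2 : ℕ) : ℝ))^2

lemma dOnes_eq_sum {n : ℕ} (g : Genotype n) :
    dOnes g = ∑ l : Fin n, (if g l = true then 1 else 0) := by
  rw [dOnes, Finset.card_filter]

lemma dOnes_three {n : ℕ} (i j k : Fin n) (hij : i ≠ j) (hik : i ≠ k) (hjk : j ≠ k)
    (c : Genotype n) (b1 b2 b3 : Bool) :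
    dOnes (fun l => if l = i then b1 else if l = j then b2 else if l = k then b3 else c l)
      = (if b1 then 1 else 0) + (if b2 then 1 else 0) + (if b3 then 1 else 0)
        + ∑ l ∈ ((Finset.univ.erase i).erase j).erase k, (if c l = true then 1 else 0) := by
  rw [dOnes_eq_sum]
  rw [← Finset.add_sum_erase _ _ (Finset.mem_univ i)]
  rw [← Finset.add_sum_erase _ _ (by simp [Ne.symm hij] : j ∈ Finset.univ.erase i)]
  rw [← Finset.add_sum_erase _ _
    (by simp [Ne.symm hik, Ne.symm hjk] : k ∈ (Finset.univ.erase i).erase j)]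
  have : ∀ l ∈ ((Finset.univ.erase i).erase j).erase k,
      (if (if l = i then b1 else if l = j then b2 else if l = k then b3 else c l) = true
        then (1:ℕ) else 0) = if c l = true then 1 else 0 := by
    intro l hl
    simp only [Finset.mem_erase] at hl
    rw [if_neg hl.2.2.1, if_neg hl.2.1, if_neg hl.1]
  rw [Finset.sum_congr rfl this]
  simp only [if_pos rfl, if_true, if_neg (Ne.symm hij), if_neg (Ne.symm hik), if_neg (Ne.symm hjk)]
  ring

lemma cond3_W {n : ℕ} (i j k : Fin n) (hij : i ≠ j) (hik : i ≠ k) (hjk : j ≠ k)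
    (c : Genotype n) : cond3 (W n) i j k c = 0 := by
  have hw : ∀ b1 b2 b3 : Bool,
      W n (fun l => if l = i then b1 else if l = j then b2 else if l = k then b3 else c l)
      = -(((((if b1 then 1 else 0) + (if b2 then 1 else 0) + (if b3 then 1 else 0)
          + ∑ l ∈ ((Finset.univ.erase i).erase j).erase k,
              (if c l = true then 1 else 0) : ℕ)) : ℝ) - ((n / 2 : ℕ) : ℝ))^2 := by
    intro b1 b2 b3
    rw [W, dOnes_three i j k hij hik hjk c]
  rw [cond3]
  simp only [Fintype.sum_prod_type, Fintype.sum_bool, hw]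
  push_cast
  ring

lemma hamming_one_iff {n : ℕ} (g h : Genotype n) :
    hammingDist g h = 1 ↔ ∃ i : Fin n, h = Function.update g i (!g i) := by
  rw [hammingDist, Finset.card_eq_one]
  constructor
  · rintro ⟨i, hi⟩
    refine ⟨i, funext fun l => ?_⟩
    have hmem : ∀ l : Fin n, g l ≠ h l ↔ l = i := by
      intro l
      rw [← Finset.mem_singleton, ← hi]
      simp
    by_cases hl : l = i
    · subst hl
      have := (hmem l).2 rfl
      rw [Function.update_self]
      revert this
      cases g l <;> cases h l <;> simp
    · rw [Function.update_of_ne hl]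
      have := (hmem l).not.2 hl
      simp only [ne_eq, not_not] at this
      exact this.symm
  · rintro ⟨i, rfl⟩
    refine ⟨i, ?_⟩
    ext l
    by_cases hl : l = i
    · subst hl; simp
    · simp [Function.update_of_ne hl, hl]

lemma dOnes_update_true {n : ℕ} (g : Genotype n) (i : Fin n) (h : g i = false) :
    dOnes (Function.update g i true) = dOnes g + 1 := by
  have : (Finset.univ.filter (fun l => Function.update g i true l = true))
      = insert i (Finset.univ.filter (fun l => g l = true)) := by
    ext l
    by_cases hl : l = i
    · subst hl; simp
    · simp [Function.update_of_ne hl, hl]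
  rw [dOnes, this, Finset.card_insert_of_notMem (by simp [h]), dOnes]

lemma dOnes_update_false {n : ℕ} (g : Genotype n) (i : Fin n) (h : g i = true) :
    dOnes (Function.update g i false) + 1 = dOnes g := by
  have : (Finset.univ.filter (fun l => Function.update g i false l = true))
      = (Finset.univ.filter (fun l => g l = true)).erase i := by
    ext l
    by_cases hl : l = i
    · subst hl; simp
    · simp [Function.update_of_ne hl, hl]
  rw [dOnes, this, dOnes, Finset.card_erase_add_one (by simp [h])]

lemma hamming_symm_flip {n : ℕ} (g : Genotype n) (i : Fin n) :
    hammingDist g (Function.update g i (!g i)) = 1 :=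
  (hamming_one_iff g _).2 ⟨i, rfl⟩

lemma peak_iff {n : ℕ} (hn : 3 ≤ n) (g : Genotype n) :
    isPeak (W n) g ↔ dOnes g = n / 2 := by
  have hm1 : 1 ≤ n / 2 := by omega
  have hmn : n / 2 < n := by omega
  constructor
  · intro hp
    by_contra hne
    rcases lt_or_gt_of_ne hne with hlt | hgt
    · -- dOnes g < n/2 : flip a false coordinate up
      have hex : ∃ i, g i = false := by
        by_contra hno
        push_neg at hno
        have huniv : (Finset.univ.filter (fun l => g l = true)) = Finset.univ := by
          apply Finset.eq_univ_iff_forall.2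
          intro l
          simp only [Finset.mem_filter, Finset.mem_univ, true_and]
          cases hl : g l
          · exact absurd hl (hno l)
          · rfl
        have : dOnes g = n := by rw [dOnes, huniv, Finset.card_univ, Fintype.card_fin]
        omega
      obtain ⟨i, hi⟩ := hex
      have hlt1 := hp (Function.update g i (!g i)) (hamming_symm_flip g i)
      rw [hi] at hlt1
      have hdh := dOnes_update_true g i hi
      rw [show (!false) = true from rfl] at hlt1
      rw [W, W, hdh] at hlt1
      have h1 : ((dOnes g : ℝ)) + 1 ≤ ((n / 2 : ℕ) : ℝ) := by exact_mod_cast hlt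
      push_cast at hlt1
      nlinarith [hlt1, h1]
    · -- dOnes g > n/2 : flip a true coordinate down
      have hex : ∃ i, g i = true := by
        have hpos : 0 < (Finset.univ.filter (fun l => g l = true)).card := by
          rw [← dOnes]; omega
        obtain ⟨i, hi⟩ := Finset.card_pos.1 hpos
        exact ⟨i, (Finset.mem_filter.1 hi).2⟩
      obtain ⟨i, hi⟩ := hex
      have hlt1 := hp (Function.update g i (!g i)) (hamming_symm_flip g i)
      rw [hi] at hlt1
      have hdh := dOnes_update_false g i hi
      rw [show (!true) = false from rfl] at hlt1
      rw [W, W] at hlt1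
      have h1 : ((n / 2 : ℕ) : ℝ) + 1 ≤ (dOnes g : ℝ) := by exact_mod_cast hgt
      have h2 : (dOnes (Function.update g i false) : ℝ) = (dOnes g : ℝ) - 1 := by
        have : ((dOnes (Function.update g i false) : ℕ) : ℝ) + 1 = ((dOnes g : ℕ) : ℝ) := by
          exact_mod_cast congrArg (Nat.cast : ℕ → ℝ) hdh
        linarith
      rw [h2] at hlt1
      nlinarith [hlt1, h1]
  · intro hd h hh
    obtain ⟨i, rfl⟩ := (hamming_one_iff g h).1 hh
    have hdh : (dOnes (Function.update g i (!g i)) : ℝ) = (dOnes g : ℝ) + 1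
        ∨ (dOnes (Function.update g i (!g i)) : ℝ) = (dOnes g : ℝ) - 1 := by
      cases hgi : g i
      · left
        have := dOnes_update_true g i hgi
        rw [hgi] at *
        push_cast [show (!false) = true from rfl, this]
        ring
      · right
        have := dOnes_update_false g i hgi
        rw [hgi] at *
        push_cast [show (!true) = false from rfl, ← this]
        ring
    rw [W, W, hd]
    rcases hdh with h1 | h1 <;> rw [h1, hd] <;> ring_nf <;> norm_num

lemma count_dOnes (n m : ℕ) :
    (Finset.univ.filter (fun g : Genotype n => dOnes g = m)).card = n.choose m := by
  have : n.choose m = (Finset.powersetCard m (Finset.univ : Finset (Fin n))).card := by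
    rw [Finset.card_powersetCard, Finset.card_univ, Fintype.card_fin]
  rw [this]
  refine Finset.card_bij' (fun g _ => Finset.univ.filter (fun l => g l = true))
    (fun s _ => fun l => decide (l ∈ s)) ?hi ?hj ?left ?right
  case hi =>
    intro g hg
    rw [Finset.mem_powersetCard]
    exact ⟨Finset.subset_univ _, (Finset.mem_filter.1 hg).2⟩
  case hj =>
    intro s hs
    rw [Finset.mem_powersetCard] at hs
    simp only [Finset.mem_filter, Finset.mem_univ, true_and]
    rw [dOnes, ← hs.2]
    congr 1
    ext l
    simp
  case left =>
    intro g hg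
    funext l
    simp only [Finset.mem_filter, Finset.mem_univ, true_and]
    cases hl : g l <;> simp [hl]
  case right =>
    intro s hs
    ext l
    simp


theorem exists_pairwise_landscape_with_many_peaks (n : ℕ) (hn : 3 ≤ n) :
    ∃ w : Genotype n → ℝ,
      (∀ i j k : Fin n, i ≠ j → i ≠ k → j ≠ k →
        ∀ c : Genotype n, cond3 w i j k c = 0) ∧
      (∀ g : Genotype n, isPeak w g ↔ dOnes g = n / 2) ∧
      n.choose (n / 2) ≤ {g : Genotype n | isPeak w g}.ncard := by
  refine ⟨W n, fun i j k hij hik hjk c => cond3_W i j k hij hik hjk c,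
    peak_iff hn, ?_⟩
  have hset : {g : Genotype n | isPeak (W n) g}
      = ↑(Finset.univ.filter (fun g : Genotype n => dOnes g = n / 2)) := by
    ext g
    simp [peak_iff hn g]
  rw [hset, Set.ncard_coe_finset, count_dOnes]
end

section
/- Every fitness landscape w : {0,1}^4 → ℝ all of whose conditional 3-way epistasis coefficients vanish (i.e., w has only pairwise interactions) has at most 6 peaks. -/
namespace PeakAux

/-- Projection dropping the last locus. -/
def proj (g : Genotype 4) : Fin 3 → Bool := fun i => g i.castSucc

lemma proj_inj {g h : Genotype 4} (h3 : g 3 = h 3) (hp : proj g = proj h) : g = h := by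
  funext l
  refine Fin.lastCases ?_ (fun i => ?_) l
  · exact h3
  · exact congrFun hp i

lemma dist_proj (g h : Genotype 4) (h3 : g 3 = h 3) :
    hammingDist (proj g) (proj h) = hammingDist g h := by
  classical
  show (Finset.univ.filter fun i => proj g i ≠ proj h i).card
      = (Finset.univ.filter fun i => g i ≠ h i).card
  conv_rhs => rw [Fin.univ_castSuccEmb]
  rw [Finset.filter_cons]
  rw [if_neg (by simpa using h3)]
  rw [Finset.filter_map, Finset.card_map]
  rfl

set_option synthInstance.maxSize 1000 in
set_option maxRecDepth 1000000 in
lemma four_class : ∀ v1 v2 v3 v4 : Fin 3 → Bool,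
    v1 ≠ v2 → v1 ≠ v3 → v1 ≠ v4 → v2 ≠ v3 → v2 ≠ v4 → v3 ≠ v4 →
    hammingDist v1 v2 ≠ 1 → hammingDist v1 v3 ≠ 1 → hammingDist v1 v4 ≠ 1 →
    hammingDist v2 v3 ≠ 1 → hammingDist v2 v4 ≠ 1 → hammingDist v3 v4 ≠ 1 →
    ((![false,false,false] ∈ ({v1,v2,v3,v4} : Finset (Fin 3 → Bool)) ∧
      ![true,true,false] ∈ ({v1,v2,v3,v4} : Finset (Fin 3 → Bool)) ∧
      ![true,false,true] ∈ ({v1,v2,v3,v4} : Finset (Fin 3 → Bool)) ∧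
      ![false,true,true] ∈ ({v1,v2,v3,v4} : Finset (Fin 3 → Bool))) ∨
     (![true,false,false] ∈ ({v1,v2,v3,v4} : Finset (Fin 3 → Bool)) ∧
      ![false,true,false] ∈ ({v1,v2,v3,v4} : Finset (Fin 3 → Bool)) ∧
      ![false,false,true] ∈ ({v1,v2,v3,v4} : Finset (Fin 3 → Bool)) ∧
      ![true,true,true] ∈ ({v1,v2,v3,v4} : Finset (Fin 3 → Bool)))) := by
  decide

lemma cond3_expand (w : Genotype 4 → ℝ) (b : Bool) :
    cond3 w 0 1 2 (fun _ => b) =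
      w ![false,false,false,b] + w ![true,true,false,b] + w ![true,false,true,b]
        + w ![false,true,true,b]
      - w ![true,false,false,b] - w ![false,true,false,b] - w ![false,false,true,b]
      - w ![true,true,true,b] := by
  have hfun : ∀ x1 x2 x3 : Bool,
      (fun l : Fin 4 => if l = 0 then x1 else if l = 1 then x2
        else if l = 2 then x3 else b) = ![x1,x2,x3,b] := by
    intro x1 x2 x3
    funext l
    fin_cases l <;> simp
  simp only [cond3, Fintype.sum_prod_type, Fintype.sum_bool, hfun]
  norm_num
  ring

/-- A 3-dimensional slice has at most 3 peaks. -/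
lemma slice (w : Genotype 4 → ℝ) (b : Bool)
    (hc : cond3 w 0 1 2 (fun _ => b) = 0)
    (S : Finset (Genotype 4)) (hS : ∀ g ∈ S, isPeak w g ∧ g 3 = b) :
    S.card ≤ 3 := by
  classical
  by_contra hlt
  push_neg at hlt
  -- extract four distinct elements of S
  obtain ⟨g1, hg1⟩ := Finset.card_pos.mp (show 0 < S.card by omega)
  have h2 : 0 < (S.erase g1).card := by
    rw [Finset.card_erase_of_mem hg1]; omega
  obtain ⟨g2, hg2⟩ := Finset.card_pos.mp h2
  have h3 : 0 < ((S.erase g1).erase g2).card := by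
    rw [Finset.card_erase_of_mem hg2, Finset.card_erase_of_mem hg1]; omega
  obtain ⟨g3, hg3⟩ := Finset.card_pos.mp h3
  have h4 : 0 < (((S.erase g1).erase g2).erase g3).card := by
    rw [Finset.card_erase_of_mem hg3, Finset.card_erase_of_mem hg2,
      Finset.card_erase_of_mem hg1]; omega
  obtain ⟨g4, hg4⟩ := Finset.card_pos.mp h4
  have hg4' : g4 ∈ (S.erase g1).erase g2 := Finset.mem_of_mem_erase hg4
  have hg4'' : g4 ∈ S.erase g1 := Finset.mem_of_mem_erase hg4'
  have hg3' : g3 ∈ S.erase g1 := Finset.mem_of_mem_erase hg3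
  have m1 : g1 ∈ S := hg1
  have m2 : g2 ∈ S := Finset.mem_of_mem_erase hg2
  have m3 : g3 ∈ S := Finset.mem_of_mem_erase hg3'
  have m4 : g4 ∈ S := Finset.mem_of_mem_erase hg4''
  have n12 : g1 ≠ g2 := (Finset.ne_of_mem_erase hg2).symm
  have n13 : g1 ≠ g3 := (Finset.ne_of_mem_erase hg3').symm
  have n14 : g1 ≠ g4 := (Finset.ne_of_mem_erase hg4'').symm
  have n23 : g2 ≠ g3 := (Finset.ne_of_mem_erase hg3).symm
  have n24 : g2 ≠ g4 := (Finset.ne_of_mem_erase hg4').symm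
  have n34 : g3 ≠ g4 := (Finset.ne_of_mem_erase hg4).symm
  -- peaks are pairwise non-adjacent
  have nonadj : ∀ g ∈ S, ∀ g' ∈ S, hammingDist g g' ≠ 1 := by
    intro g hg g' hg' hd
    have hd' : hammingDist g' g = 1 := by rwa [hammingDist_comm] at hd
    have := (hS g hg).1 g' hd
    have := (hS g' hg').1 g hd'
    linarith
  -- projections
  have pd : ∀ g ∈ S, ∀ g' ∈ S, hammingDist (proj g) (proj g') = hammingDist g g' := by
    intro g hg g' hg'
    exact dist_proj g g' ((hS g hg).2.trans (hS g' hg').2.symm)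
  have pn : ∀ g ∈ S, ∀ g' ∈ S, g ≠ g' → proj g ≠ proj g' := by
    intro g hg g' hg' hne hp
    exact hne (proj_inj ((hS g hg).2.trans (hS g' hg').2.symm) hp)
  have key := four_class (proj g1) (proj g2) (proj g3) (proj g4)
    (pn g1 m1 g2 m2 n12) (pn g1 m1 g3 m3 n13) (pn g1 m1 g4 m4 n14)
    (pn g2 m2 g3 m3 n23) (pn g2 m2 g4 m4 n24) (pn g3 m3 g4 m4 n34)
    (by rw [pd g1 m1 g2 m2]; exact nonadj g1 m1 g2 m2)
    (by rw [pd g1 m1 g3 m3]; exact nonadj g1 m1 g3 m3)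
    (by rw [pd g1 m1 g4 m4]; exact nonadj g1 m1 g4 m4)
    (by rw [pd g2 m2 g3 m3]; exact nonadj g2 m2 g3 m3)
    (by rw [pd g2 m2 g4 m4]; exact nonadj g2 m2 g4 m4)
    (by rw [pd g3 m3 g4 m4]; exact nonadj g3 m3 g4 m4)
  -- from membership of v in {proj g1,...}, get a peak equal to ![v 0, v 1, v 2, b]
  have getPeak : ∀ v : Fin 3 → Bool,
      v ∈ ({proj g1, proj g2, proj g3, proj g4} : Finset (Fin 3 → Bool)) →
      isPeak w ![v 0, v 1, v 2, b] := by
    intro v hv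
    have : ∃ g ∈ S, proj g = v := by
      simp only [Finset.mem_insert, Finset.mem_singleton] at hv
      rcases hv with h | h | h | h
      exacts [⟨g1, m1, h.symm⟩, ⟨g2, m2, h.symm⟩, ⟨g3, m3, h.symm⟩, ⟨g4, m4, h.symm⟩]
    obtain ⟨g, hgS, hgv⟩ := this
    have hgb : g 3 = b := (hS g hgS).2
    have : g = ![v 0, v 1, v 2, b] := by
      funext l
      refine Fin.lastCases ?_ (fun i => ?_) l
      · exact hgb
      · rw [← hgv]
        fin_cases i <;> rfl
    exact this ▸ (hS g hgS).1
  rw [cond3_expand w b] at hc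
  rcases key with ⟨e1, e2, e3, e4⟩ | ⟨o1, o2, o3, o4⟩
  · have p1 := getPeak _ e1
    have p2 := getPeak _ e2
    have p3 := getPeak _ e3
    have p4 := getPeak _ e4
    simp only [Matrix.cons_val_zero, Matrix.cons_val_one, Matrix.head_cons,
      Matrix.cons_val_two, Matrix.tail_cons] at p1 p2 p3 p4
    have i1 : w ![true,false,false,b] < w ![false,false,false,b] :=
      p1 _ (by cases b <;> decide)
    have i2 : w ![false,true,false,b] < w ![true,true,false,b] :=
      p2 _ (by cases b <;> decide)
    have i3 : w ![false,false,true,b] < w ![true,false,true,b] :=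
      p3 _ (by cases b <;> decide)
    have i4 : w ![true,true,true,b] < w ![false,true,true,b] :=
      p4 _ (by cases b <;> decide)
    linarith
  · have p1 := getPeak _ o1
    have p2 := getPeak _ o2
    have p3 := getPeak _ o3
    have p4 := getPeak _ o4
    simp only [Matrix.cons_val_zero, Matrix.cons_val_one, Matrix.head_cons,
      Matrix.cons_val_two, Matrix.tail_cons] at p1 p2 p3 p4
    have i1 : w ![false,false,false,b] < w ![true,false,false,b] :=
      p1 _ (by cases b <;> decide)
    have i2 : w ![true,true,false,b] < w ![false,true,false,b] :=
      p2 _ (by cases b <;> decide)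
    have i3 : w ![true,false,true,b] < w ![false,false,true,b] :=
      p3 _ (by cases b <;> decide)
    have i4 : w ![false,true,true,b] < w ![true,true,true,b] :=
      p4 _ (by cases b <;> decide)
    linarith

end PeakAux

theorem pairwise_four_locus_at_most_six_peaks
    (w : Genotype 4 → ℝ)
    (h : ∀ i j k : Fin 4, i ≠ j → i ≠ k → j ≠ k →
      ∀ c : Genotype 4, cond3 w i j k c = 0) :
    {g : Genotype 4 | isPeak w g}.ncard ≤ 6 := by
  classical
  set P : Finset (Genotype 4) := Finset.univ.filter (fun g => isPeak w g) with hP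
  have hset : {g : Genotype 4 | isPeak w g} = ↑P := by
    ext g; simp [hP]
  rw [hset, Set.ncard_coe_finset]
  have hsub : P ⊆ P.filter (fun g => g 3 = false) ∪ P.filter (fun g => g 3 = true) := by
    intro g hg
    rcases Bool.dichotomy (g 3) with hb | hb <;>
      simp [Finset.mem_union, Finset.mem_filter, hg, hb]
  calc P.card ≤ (P.filter (fun g => g 3 = false) ∪ P.filter (fun g => g 3 = true)).card :=
        Finset.card_le_card hsub
    _ ≤ (P.filter (fun g => g 3 = false)).card + (P.filter (fun g => g 3 = true)).card :=
        Finset.card_union_le _ _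
    _ ≤ 3 + 3 := by
        gcongr
        · exact PeakAux.slice w false (h 0 1 2 (by decide) (by decide) (by decide) _)
            _ (fun g hg => by simpa [hP, Finset.mem_filter] using hg)
        · exact PeakAux.slice w true (h 0 1 2 (by decide) (by decide) (by decide) _)
            _ (fun g hg => by simpa [hP, Finset.mem_filter] using hg)
    _ ≤ 6 := by norm_num
end

section
/- Every fitness landscape w : {0,1}^3 → ℝ whose (total) 3-way epistasis coefficient vanishes, i.e., w(000) + w(011) + w(101) + w(110) − w(001) − w(010) − w(100) − w(111) = 0, has at most 3 peaks. -/
set_option maxHeartbeats 4000000 in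
set_option synthInstance.maxSize 4000 in
set_option synthInstance.maxHeartbeats 2000000 in
lemma comb : ∀ a b c d : Genotype 3, a ≠ b → a ≠ c → a ≠ d → b ≠ c → b ≠ d → c ≠ d →
    hammingDist a b ≠ 1 → hammingDist a c ≠ 1 → hammingDist a d ≠ 1 →
    hammingDist b c ≠ 1 → hammingDist b d ≠ 1 → hammingDist c d ≠ 1 →
    ({a,b,c,d} : Finset (Genotype 3)) =
      {![false,false,false], ![false,true,true], ![true,false,true], ![true,true,false]} ∨
    ({a,b,c,d} : Finset (Genotype 3)) =
      {![false,false,true], ![false,true,false], ![true,false,false], ![true,true,true]} := by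
  decide

theorem no_three_way_epistasis_at_most_three_peaks
    (w : Genotype 3 → ℝ)
    (h : w ![false, false, false] + w ![false, true, true] +
        w ![true, false, true] + w ![true, true, false] -
        w ![false, false, true] - w ![false, true, false] -
        w ![true, false, false] - w ![true, true, true] = 0) :
    {g : Genotype 3 | isPeak w g}.ncard ≤ 3 := by
  by_contra hc
  push_neg at hc
  set S := {g : Genotype 3 | isPeak w g} with hSdef
  have hfin : S.Finite := Set.toFinite S
  have hcard : 3 < hfin.toFinset.card := by
    rwa [← Set.ncard_eq_toFinset_card S hfin]
  obtain ⟨a, ha⟩ : hfin.toFinset.Nonempty := Finset.card_pos.mp (by omega)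
  have herase : 3 ≤ (hfin.toFinset.erase a).card := by
    rw [Finset.card_erase_of_mem ha]; omega
  obtain ⟨t, hts, htc⟩ := Finset.exists_subset_card_eq herase
  obtain ⟨b, c, d, hbc, hbd, hcd, rfl⟩ := Finset.card_eq_three.mp htc
  have hb : b ∈ hfin.toFinset.erase a := hts (by simp)
  have hc' : c ∈ hfin.toFinset.erase a := hts (by simp)
  have hd : d ∈ hfin.toFinset.erase a := hts (by simp)
  have hab : a ≠ b := fun e => (Finset.ne_of_mem_erase hb) e.symm
  have hac : a ≠ c := fun e => (Finset.ne_of_mem_erase hc') e.symm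
  have had : a ≠ d := fun e => (Finset.ne_of_mem_erase hd) e.symm
  have pa : isPeak w a := (hfin.mem_toFinset.mp ha)
  have pb : isPeak w b := (hfin.mem_toFinset.mp (Finset.mem_of_mem_erase hb))
  have pc : isPeak w c := (hfin.mem_toFinset.mp (Finset.mem_of_mem_erase hc'))
  have pd : isPeak w d := (hfin.mem_toFinset.mp (Finset.mem_of_mem_erase hd))
  have nonadj : ∀ g g' : Genotype 3, isPeak w g → isPeak w g' → hammingDist g g' ≠ 1 := by
    intro g g' pg pg' hdist
    have h1 := pg g' hdist
    have h2 := pg' g (by rwa [hammingDist_comm])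
    linarith
  have hcomb := comb a b c d hab hac had hbc hbd hcd
    (nonadj a b pa pb) (nonadj a c pa pc) (nonadj a d pa pd)
    (nonadj b c pb pc) (nonadj b d pb pd) (nonadj c d pc pd)
  have hpeaks : ∀ x ∈ ({a,b,c,d} : Finset (Genotype 3)), isPeak w x := by
    intro x hx
    simp only [Finset.mem_insert, Finset.mem_singleton] at hx
    rcases hx with rfl | rfl | rfl | rfl <;> assumption
  rcases hcomb with he | ho
  · rw [he] at hpeaks
    have p1 : isPeak w ![false,false,false] := hpeaks _ (by decide)
    have p2 : isPeak w ![false,true,true] := hpeaks _ (by decide)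
    have p3 : isPeak w ![true,false,true] := hpeaks _ (by decide)
    have p4 : isPeak w ![true,true,false] := hpeaks _ (by decide)
    have q1 := p1 ![false,false,true] (by decide)
    have q2 := p2 ![false,true,false] (by decide)
    have q3 := p3 ![true,false,false] (by decide)
    have q4 := p4 ![true,true,true] (by decide)
    linarith
  · rw [ho] at hpeaks
    have p1 : isPeak w ![false,false,true] := hpeaks _ (by decide)
    have p2 : isPeak w ![false,true,false] := hpeaks _ (by decide)
    have p3 : isPeak w ![true,false,false] := hpeaks _ (by decide)
    have p4 : isPeak w ![true,true,true] := hpeaks _ (by decide)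
    have q1 := p1 ![false,false,false] (by decide)
    have q2 := p2 ![false,true,true] (by decide)
    have q3 := p3 ![true,false,true] (by decide)
    have q4 := p4 ![true,true,false] (by decide)
    linarith
end
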